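/- arXiv:2008.09265 — 4 statements merged into one kernel-verified Lean document; each statement's English description precedes it below -/
import Mathlib

section
/- If G is a nonempty bipartite graph, then ⌈s(G)/2⌉ ≤ d(G) ≤ s(G). -/
open SimpleGraph Function

def edgePlus {V : Type*} (f : V → ℤ) : Sym2 V → ℤ :=
  Sym2.lift ⟨fun u v => f u + f v, fun u v => by ring⟩

def edgeMinus {V : Type*} (f : V → ℤ) : Sym2 V → ℤ :=
  Sym2.lift ⟨fun u v => |f u - f v|, fun u v => abs_sub_comm _ _⟩

/-- The sum index: the minimum, over injective vertex labelings `f : V → ℤ`,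
of the number of distinct values of `f⁺(uv) = f u + f v` on the edges. -/
noncomputable def sumIndex {V : Type*} (G : SimpleGraph V) : ℕ :=
  sInf {k | ∃ f : V → ℤ, Function.Injective f ∧ (edgePlus f '' G.edgeSet).ncard = k}

/-- The difference index: the minimum, over injective vertex labelings `f : V → ℤ`,
of the number of distinct values of `f⁻(uv) = |f u − f v|` on the edges. -/
noncomputable def diffIndex {V : Type*} (G : SimpleGraph V) : ℕ :=
  sInf {k | ∃ f : V → ℤ, Function.Injective f ∧ (edgeMinus f '' G.edgeSet).ncard = k}

lemma edgePlus_mk {V : Type*} (f : V → ℤ) (u v : V) : edgePlus f s(u, v) = f u + f v := rfl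

lemma edgeMinus_mk {V : Type*} (f : V → ℤ) (u v : V) : edgeMinus f s(u, v) = |f u - f v| := rfl

lemma exists_shift {V : Type*} [Fintype V] (f : V → ℤ) : ∃ N : ℤ, ∀ v, 0 < f v + N := by
  obtain ⟨M, hM⟩ := Finset.exists_le (Finset.univ.image fun v => -f v)
  refine ⟨M + 1, fun v => ?_⟩
  have := hM (-f v) (Finset.mem_image_of_mem _ (Finset.mem_univ v))
  linarith

lemma neg_aux {V : Type*} (G : SimpleGraph V) (C : G.Coloring (Fin 2))
    (f : V → ℤ) (hf : Injective f) (hpos : ∀ v, 0 < f v) :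
    Injective (fun v => if C v = 0 then f v else -f v) ∧
    (∀ e ∈ G.edgeSet, edgeMinus (fun v => if C v = 0 then f v else -f v) e = edgePlus f e) ∧
    (∀ e ∈ G.edgeSet, |edgePlus (fun v => if C v = 0 then f v else -f v) e| = edgeMinus f e) := by
  set g : V → ℤ := fun v => if C v = 0 then f v else -f v with hg
  refine ⟨?_, ?_, ?_⟩
  · intro a b h
    simp only [hg] at h
    by_cases ha : C a = 0 <;> by_cases hb : C b = 0 <;> simp [ha, hb] at h
    · exact hf h
    · have := hpos a; have := hpos b; linarith
    · have := hpos a; have := hpos b; linarith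
    · exact hf h
  · intro e he
    induction e using Sym2.ind with
    | _ u v =>
      rw [SimpleGraph.mem_edgeSet] at he
      have hne : C u ≠ C v := C.valid he
      have hu := hpos u; have hv := hpos v
      by_cases h0 : C u = 0
      · have h1 : ¬ C v = 0 := fun h => hne (h0.trans h.symm)
        rw [edgeMinus_mk, edgePlus_mk]
        simp only [hg, h0, h1, if_true, if_false, if_neg, if_pos]
        rw [sub_neg_eq_add, abs_of_pos (by linarith)]
      · have h1 : C v = 0 := by omega
        rw [edgeMinus_mk, edgePlus_mk]
        simp only [hg, h0, h1, if_true, if_false, if_neg, if_pos]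
        rw [neg_sub_left, abs_neg, abs_of_pos (by linarith), add_comm]
  · intro e he
    induction e using Sym2.ind with
    | _ u v =>
      rw [SimpleGraph.mem_edgeSet] at he
      have hne : C u ≠ C v := C.valid he
      by_cases h0 : C u = 0
      · have h1 : ¬ C v = 0 := fun h => hne (h0.trans h.symm)
        rw [edgeMinus_mk, edgePlus_mk]
        simp only [hg, h0, h1, if_true, if_false, if_neg, if_pos]
        rfl
      · have h1 : C v = 0 := by omega
        rw [edgeMinus_mk, edgePlus_mk]
        simp only [hg, h0, h1, if_true, if_false, if_neg, if_pos]
        rw [neg_add_eq_sub, abs_sub_comm]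

theorem stmt15 {V : Type*} [Fintype V] (G : SimpleGraph V)
    (hG : G.edgeSet.Nonempty) (hbip : G.Colorable 2) :
    (sumIndex G + 1) / 2 ≤ diffIndex G ∧ diffIndex G ≤ sumIndex G := by
  classical
  obtain ⟨C⟩ := hbip
  have hfinE : G.edgeSet.Finite := Set.toFinite _
  -- an injective labeling exists
  have hinj : ∃ f : V → ℤ, Injective f :=
    ⟨fun v => ((Fintype.equivFin V v : ℕ) : ℤ),
      fun a b h => (Fintype.equivFin V).injective (Fin.val_injective (Int.ofNat.inj h))⟩
  have hSne : {k | ∃ f : V → ℤ, Injective f ∧ (edgePlus f '' G.edgeSet).ncard = k}.Nonempty := by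
    obtain ⟨f, hf⟩ := hinj; exact ⟨_, f, hf, rfl⟩
  have hDne : {k | ∃ f : V → ℤ, Injective f ∧ (edgeMinus f '' G.edgeSet).ncard = k}.Nonempty := by
    obtain ⟨f, hf⟩ := hinj; exact ⟨_, f, hf, rfl⟩
  -- d ≤ s
  have hds : diffIndex G ≤ sumIndex G := by
    obtain ⟨f, hf, hcard⟩ := Nat.sInf_mem hSne
    obtain ⟨N, hN⟩ := exists_shift f
    set f' : V → ℤ := fun v => f v + N with hf'def
    have hf' : Injective f' := fun a b h => hf (by simpa [hf'def] using h)
    obtain ⟨hginj, hgeq, -⟩ := neg_aux G C f' hf' hN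
    set g : V → ℤ := fun v => if C v = 0 then f' v else -f' v
    have him : edgeMinus g '' G.edgeSet = edgePlus f' '' G.edgeSet :=
      Set.image_congr hgeq
    have him2 : edgePlus f' '' G.edgeSet = (fun x => x + 2 * N) '' (edgePlus f '' G.edgeSet) := by
      rw [← Set.image_comp]
      refine Set.image_congr fun e _ => ?_
      induction e using Sym2.ind with
      | _ u v => simp [edgePlus_mk, hf'def]; ring
    have : (edgeMinus g '' G.edgeSet).ncard = sumIndex G := by
      rw [him, him2, Set.ncard_image_of_injective _ (add_left_injective (2 * N)), hcard]
      rfl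
    exact le_of_le_of_eq (Nat.sInf_le ⟨g, hginj, rfl⟩) this
  -- s ≤ 2 d
  have hsd : sumIndex G ≤ 2 * diffIndex G := by
    obtain ⟨g, hg, hcard⟩ := Nat.sInf_mem hDne
    obtain ⟨N, hN⟩ := exists_shift g
    set g' : V → ℤ := fun v => g v + N with hg'def
    have hg' : Injective g' := fun a b h => hg (by simpa [hg'def] using h)
    have hmeq : ∀ e, edgeMinus g' e = edgeMinus g e := by
      intro e
      induction e using Sym2.ind with
      | _ u v => simp [edgeMinus_mk, hg'def]
    obtain ⟨hfinj, -, hfabs⟩ := neg_aux G C g' hg' hN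
    set f : V → ℤ := fun v => if C v = 0 then g' v else -g' v
    set D := edgeMinus g '' G.edgeSet with hD
    have hDfin : D.Finite := hfinE.image _
    have hsub : edgePlus f '' G.edgeSet ⊆ D ∪ (fun x => -x) '' D := by
      rintro x ⟨e, he, rfl⟩
      have habs : |edgePlus f e| = edgeMinus g e := by rw [hfabs e he, hmeq]
      rcases abs_cases (edgePlus f e) with ⟨h1, -⟩ | ⟨h1, -⟩
      · exact Or.inl ⟨e, he, by rw [← habs, h1]⟩
      · exact Or.inr ⟨_, ⟨e, he, rfl⟩, by rw [← habs, h1]; ring⟩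
    have hle : (edgePlus f '' G.edgeSet).ncard ≤ 2 * diffIndex G := by
      calc (edgePlus f '' G.edgeSet).ncard
          ≤ (D ∪ (fun x => -x) '' D).ncard :=
            Set.ncard_le_ncard hsub (hDfin.union (hDfin.image _))
        _ ≤ D.ncard + ((fun x : ℤ => -x) '' D).ncard := Set.ncard_union_le _ _
        _ ≤ D.ncard + D.ncard := by
            have := Set.ncard_image_le (f := fun x : ℤ => -x) (s := D) hDfin
            omega
        _ = 2 * diffIndex G := by rw [hcard]; rw [two_mul]; rfl
    exact le_trans (Nat.sInf_le ⟨f, hfinj, rfl⟩) hle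
  exact ⟨by omega, hds⟩
end

section
/- For every integer n ≥ 2, the difference index of the complete graph K_n equals n − 1. -/
open SimpleGraph Function

theorem stmt16 (n : ℕ) (hn : 2 ≤ n) :
    diffIndex (completeGraph (Fin n)) = n - 1 := by
  have hfin : ∀ f : Fin n → ℤ,
      (edgeMinus f '' (completeGraph (Fin n)).edgeSet).Finite :=
    fun f => ((Set.toFinite _).image _)
  apply le_antisymm
  · -- upper bound via identity labeling
    apply Nat.sInf_le
    refine ⟨fun i => (i : ℤ), fun a b h => by
      have : (a : ℤ) = b := h
      exact Fin.ext (by exact_mod_cast this), ?_⟩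
    have himg : edgeMinus (fun i : Fin n => (i : ℤ)) '' (completeGraph (Fin n)).edgeSet
        = Set.Icc (1 : ℤ) ((n : ℤ) - 1) := by
      ext d
      constructor
      · rintro ⟨e, he, rfl⟩
        induction e using Sym2.ind with
        | _ u v =>
          rw [SimpleGraph.mem_edgeSet] at he
          have huv : u ≠ v := he
          have h1 : ((u : ℤ)) ≠ (v : ℤ) := by
            intro h; exact huv (Fin.ext (by exact_mod_cast h))
          have hu := u.isLt
          have hv := v.isLt
          simp only [edgeMinus, Sym2.lift_mk]
          constructor
          · exact Int.one_le_abs (sub_ne_zero.mpr h1)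
          · rw [abs_sub_le_iff]
            constructor <;> [skip; skip] <;>
              · have : (u : ℤ) < n := by exact_mod_cast hu
                have : (v : ℤ) < n := by exact_mod_cast hv
                have : (0:ℤ) ≤ u := by positivity
                have : (0:ℤ) ≤ v := by positivity
                omega
      · rintro ⟨h1, h2⟩
        have hd : d.toNat < n := by omega
        refine ⟨s(⟨0, by omega⟩, ⟨d.toNat, hd⟩), ?_, ?_⟩
        · rw [SimpleGraph.mem_edgeSet]
          simp only [completeGraph, top_adj, ne_eq]
          intro h
          have := congrArg Fin.val h
          simp at this
          omega
        · simp only [edgeMinus, Sym2.lift_mk]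
          have : ((⟨0, by omega⟩ : Fin n) : ℤ) = 0 := by simp
          rw [this]
          have : ((⟨d.toNat, hd⟩ : Fin n) : ℤ) = d := by
            simp; omega
          rw [this]
          rw [abs_sub_comm, sub_zero]
          exact abs_of_nonneg (by omega)
    rw [himg, Set.ncard_eq_toFinset_card']
    simp [Int.toNat_sub]
  · -- lower bound
    have hinj : Function.Injective (fun i : Fin n => (i:ℤ)) := fun a b h => by
      have : (a : ℤ) = b := h
      exact Fin.ext (by exact_mod_cast this)
    refine le_csInf ⟨_, (fun i : Fin n => (i:ℤ)), hinj, rfl⟩ ?_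
    rintro k ⟨f, hf, rfl⟩
    have : Nonempty (Fin n) := ⟨⟨0, by omega⟩⟩
    obtain ⟨m, hm⟩ := Finite.exists_min f
    have key : ({m}ᶜ : Set (Fin n)).ncard ≤
        (edgeMinus f '' (completeGraph (Fin n)).edgeSet).ncard := by
      apply Set.ncard_le_ncard_of_injOn (fun v => f v - f m)
      · intro v hv
        refine ⟨s(v, m), ?_, ?_⟩
        · rw [SimpleGraph.mem_edgeSet]
          exact hv
        · simp only [edgeMinus, Sym2.lift_mk]
          exact abs_of_nonneg (by have := hm v; omega)
      · intro a _ b _ h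
        dsimp only at h
        exact hf (by omega)
    calc n - 1 = ({m}ᶜ : Set (Fin n)).ncard := by
          rw [Set.ncard_eq_toFinset_card', Set.toFinset_compl, Set.toFinset_singleton,
            Finset.card_compl]
          simp
      _ ≤ _ := key
end

section
/- For all positive integers n, m, the difference index of the complete bipartite graph K_{n,m} equals ⌈(n + m − 1)/2⌉. -/
open SimpleGraph Function

private lemma diffIndex_upper (n m : ℕ) (hn : 0 < n) (hm : 0 < m) :
    ∃ f : (Fin n ⊕ Fin m) → ℤ, Function.Injective f ∧
      (edgeMinus f '' (completeBipartiteGraph (Fin n) (Fin m)).edgeSet).ncard = (n + m) / 2 := by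
  set b : ℕ := (n + m) / 2 with hbdef
  set a : ℕ := n + m - 1 - b with hadef
  have hab : a + b = n + m - 1 := by omega
  have hale : a ≤ b := by omega
  set s : ℤ := 2*(n:ℤ) - 1 - 2*(a:ℤ) with hsdef
  refine ⟨Sum.elim (fun i : Fin n => 2*(i.1:ℤ)) (fun j : Fin m => 2*(j.1:ℤ) + s), ?_, ?_⟩
  · intro x y h
    match x, y with
    | .inl i, .inl i' => simp only [Sum.elim_inl] at h; exact congrArg Sum.inl (Fin.ext (by omega))
    | .inr j, .inr j' => simp only [Sum.elim_inr] at h; exact congrArg Sum.inr (Fin.ext (by omega))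
    | .inl i, .inr j => simp only [Sum.elim_inl, Sum.elim_inr, hsdef] at h; omega
    | .inr j, .inl i => simp only [Sum.elim_inl, Sum.elim_inr, hsdef] at h; omega
  · have himg : edgeMinus (Sum.elim (fun i : Fin n => 2*(i.1:ℤ)) (fun j : Fin m => 2*(j.1:ℤ) + s))
        '' (completeBipartiteGraph (Fin n) (Fin m)).edgeSet
        = ↑((Finset.range b).image (fun t : ℕ => 2*(t:ℤ)+1)) := by
      ext x
      simp only [Finset.coe_image, Finset.coe_range, Set.mem_image, Set.mem_Iio]
      constructor
      · rintro ⟨e, he, rfl⟩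
        revert he
        refine Sym2.ind (fun u v he => ?_) e
        rw [SimpleGraph.mem_edgeSet] at he
        match u, v with
        | .inl i, .inl i' => simp [completeBipartiteGraph] at he
        | .inr j, .inr j' => simp [completeBipartiteGraph] at he
        | .inl i, .inr j =>
          show ∃ t, t < b ∧ 2*(t:ℤ)+1 = |2*(i.1:ℤ) - (2*(j.1:ℤ) + s)|
          have hi := i.2; have hj := j.2
          rcases abs_cases (2*(i.1:ℤ) - (2*(j.1:ℤ) + s)) with ⟨h1, h2⟩ | ⟨h1, h2⟩ <;>
            rw [h1] <;>
            [exact ⟨((2*(i.1:ℤ) - (2*(j.1:ℤ) + s) - 1)/2).toNat, by omega, by omega⟩;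
             exact ⟨((-(2*(i.1:ℤ) - (2*(j.1:ℤ) + s)) - 1)/2).toNat, by omega, by omega⟩]
        | .inr j, .inl i =>
          show ∃ t, t < b ∧ 2*(t:ℤ)+1 = |2*(j.1:ℤ) + s - 2*(i.1:ℤ)|
          have hi := i.2; have hj := j.2
          rcases abs_cases (2*(j.1:ℤ) + s - 2*(i.1:ℤ)) with ⟨h1, h2⟩ | ⟨h1, h2⟩ <;>
            rw [h1] <;>
            [exact ⟨((2*(j.1:ℤ) + s - 2*(i.1:ℤ) - 1)/2).toNat, by omega, by omega⟩;
             exact ⟨((-(2*(j.1:ℤ) + s - 2*(i.1:ℤ)) - 1)/2).toNat, by omega, by omega⟩]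
      · rintro ⟨t, ht, rfl⟩
        by_cases hc : n ≤ t + a + 1
        · refine ⟨s(Sum.inl ⟨0, hn⟩, Sum.inr ⟨t + a + 1 - n, by omega⟩), ?_, ?_⟩
          · rw [SimpleGraph.mem_edgeSet]; simp [completeBipartiteGraph]
          · show |2*((0:ℕ):ℤ) - (2*(((t + a + 1 - n : ℕ)):ℤ) + s)| = 2*(t:ℤ)+1
            rw [abs_eq (by positivity)]; omega
        · refine ⟨s(Sum.inl ⟨n - 1 - (t + a), by omega⟩, Sum.inr ⟨0, hm⟩), ?_, ?_⟩
          · rw [SimpleGraph.mem_edgeSet]; simp [completeBipartiteGraph]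
          · show |2*(((n - 1 - (t + a) : ℕ)):ℤ) - (2*((0:ℕ):ℤ) + s)| = 2*(t:ℤ)+1
            rw [abs_eq (by positivity)]; omega
    rw [himg, Set.ncard_coe_finset, Finset.card_image_of_injective _ (fun t t' h => by omega),
      Finset.card_range]

private lemma diffIndex_lower (n m : ℕ) (hn : 0 < n) (hm : 0 < m) (f : (Fin n ⊕ Fin m) → ℤ)
    (hf : Function.Injective f) :
    n + m - 1 ≤ 2 * (edgeMinus f '' (completeBipartiteGraph (Fin n) (Fin m)).edgeSet).ncard := by
  classical
  set S := edgeMinus f '' (completeBipartiteGraph (Fin n) (Fin m)).edgeSet with hS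
  have hSfin : S.Finite := Set.toFinite _
  set SF := hSfin.toFinset with hSF
  have hcard : SF.card = S.ncard := by rw [hSF, ← Set.ncard_eq_toFinset_card S hSfin]
  -- max of A values, max of B values
  have hAne : (Finset.univ.image (fun i : Fin n => f (Sum.inl i))).Nonempty :=
    ⟨f (Sum.inl ⟨0, hn⟩), Finset.mem_image_of_mem _ (Finset.mem_univ _)⟩
  have hBne : (Finset.univ.image (fun j : Fin m => f (Sum.inr j))).Nonempty :=
    ⟨f (Sum.inr ⟨0, hm⟩), Finset.mem_image_of_mem _ (Finset.mem_univ _)⟩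
  set Amax := (Finset.univ.image (fun i : Fin n => f (Sum.inl i))).max' hAne with hAm
  set Bmax := (Finset.univ.image (fun j : Fin m => f (Sum.inr j))).max' hBne with hBm
  obtain ⟨i0, -, hi0⟩ := Finset.mem_image.mp ((Finset.univ.image (fun i : Fin n => f (Sum.inl i))).max'_mem hAne)
  obtain ⟨j0, -, hj0⟩ := Finset.mem_image.mp ((Finset.univ.image (fun j : Fin m => f (Sum.inr j))).max'_mem hBne)
  set D1 := Finset.univ.image (fun i : Fin n => f (Sum.inl i) - Bmax) with hD1
  set D2 := Finset.univ.image (fun j : Fin m => Amax - f (Sum.inr j)) with hD2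
  have hD1c : D1.card = n := by
    rw [hD1, Finset.card_image_of_injective, Finset.card_univ, Fintype.card_fin]
    intro x y h
    dsimp only at h
    exact Sum.inl_injective (hf (by omega : f (Sum.inl x) = f (Sum.inl y)))
  have hD2c : D2.card = m := by
    rw [hD2, Finset.card_image_of_injective, Finset.card_univ, Fintype.card_fin]
    intro x y h
    dsimp only at h
    exact Sum.inr_injective (hf (by omega : f (Sum.inr x) = f (Sum.inr y)))
  have hinter : (D1 ∩ D2).card ≤ 1 := by
    refine Finset.card_le_one.mpr fun x hx y hy => ?_
    have key : ∀ z ∈ D1 ∩ D2, z = Amax - Bmax := by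
      intro z hz
      rw [Finset.mem_inter] at hz
      obtain ⟨i, -, hi⟩ := Finset.mem_image.mp hz.1
      obtain ⟨j, -, hj⟩ := Finset.mem_image.mp hz.2
      have h1 : f (Sum.inl i) ≤ Amax := by
        rw [hAm]
        exact Finset.le_max' (Finset.univ.image (fun i : Fin n => f (Sum.inl i))) _
          (Finset.mem_image_of_mem _ (Finset.mem_univ i))
      have h2 : f (Sum.inr j) ≤ Bmax := by
        rw [hBm]
        exact Finset.le_max' (Finset.univ.image (fun j : Fin m => f (Sum.inr j))) _
          (Finset.mem_image_of_mem _ (Finset.mem_univ j))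
      omega
    rw [key x hx, key y hy]
  have hunion : n + m - 1 ≤ (D1 ∪ D2).card := by
    have := Finset.card_union_add_card_inter D1 D2
    omega
  -- D1 ∪ D2 ⊆ SF ∪ SF.image Neg.neg
  have hsub : D1 ∪ D2 ⊆ SF ∪ SF.image (fun x => -x) := by
    intro d hd
    have habs : |d| ∈ S := by
      rw [Finset.mem_union] at hd
      rcases hd with hd | hd
      · obtain ⟨i, -, rfl⟩ := Finset.mem_image.mp hd
        refine ⟨s(Sum.inl i, Sum.inr j0), ?_, ?_⟩
        · rw [SimpleGraph.mem_edgeSet]; simp [completeBipartiteGraph]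
        · show |f (Sum.inl i) - f (Sum.inr j0)| = _
          rw [hj0]
      · obtain ⟨j, -, rfl⟩ := Finset.mem_image.mp hd
        refine ⟨s(Sum.inl i0, Sum.inr j), ?_, ?_⟩
        · rw [SimpleGraph.mem_edgeSet]; simp [completeBipartiteGraph]
        · show |f (Sum.inl i0) - f (Sum.inr j)| = _
          rw [hi0]
    rw [Finset.mem_union]
    rcases abs_cases d with ⟨h1, -⟩ | ⟨h1, -⟩
    · left; rw [hSF, Set.Finite.mem_toFinset, ← h1]; exact habs
    · right
      refine Finset.mem_image.mpr ⟨|d|, ?_, by omega⟩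
      rw [hSF, Set.Finite.mem_toFinset]; exact habs
  calc n + m - 1 ≤ (D1 ∪ D2).card := hunion
    _ ≤ (SF ∪ SF.image (fun x => -x)).card := Finset.card_le_card hsub
    _ ≤ SF.card + (SF.image (fun x => -x)).card := Finset.card_union_le _ _
    _ ≤ SF.card + SF.card := by have := Finset.card_image_le (s := SF) (f := fun x : ℤ => -x); omega
    _ = 2 * S.ncard := by omega

theorem stmt17 (n m : ℕ) (hn : 0 < n) (hm : 0 < m) :
    diffIndex (completeBipartiteGraph (Fin n) (Fin m)) = (n + m - 1 + 1) / 2 := by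
  obtain ⟨f0, hf0, hc0⟩ := diffIndex_upper n m hn hm
  have hne : {k | ∃ f : (Fin n ⊕ Fin m) → ℤ, Function.Injective f ∧
      (edgeMinus f '' (completeBipartiteGraph (Fin n) (Fin m)).edgeSet).ncard = k}.Nonempty :=
    ⟨(n + m) / 2, f0, hf0, hc0⟩
  unfold diffIndex
  apply le_antisymm
  · exact Nat.sInf_le ⟨f0, hf0, by omega⟩
  · obtain ⟨g, hg, hcg⟩ := Nat.sInf_mem hne
    have := diffIndex_lower n m hn hm g hg
    omega
end

section
/- A nonempty simple graph G (without isolated vertices) has difference index 1 if and only if G is a disjoint union of paths. -/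
open SimpleGraph Function

lemma walk_ivt {V : Type*} {G : SimpleGraph V} (f : V → ℤ)
    (hdiff : ∀ u v, G.Adj u v → |f u - f v| = 1) :
    ∀ {x y : V} (p : G.Walk x y) (c : ℤ), f x ≤ c → c ≤ f y →
      ∃ z ∈ p.support, f z = c := by
  intro x y p
  induction p with
  | nil =>
    intro c h1 h2
    exact ⟨_, by simp, le_antisymm h1 h2⟩
  | @cons x x' y h p ih =>
    intro c h1 h2
    rcases eq_or_lt_of_le h1 with heq | hlt
    · exact ⟨x, by simp, heq⟩
    · have hd := hdiff _ _ h
      rw [abs_eq (by norm_num)] at hd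
      have hx' : f x' ≤ c := by omega
      obtain ⟨z, hz, hzc⟩ := ih c hx' h2
      exact ⟨z, by simp [hz], hzc⟩

lemma endpoint_extreme {V : Type*} {G : SimpleGraph V} (f : V → ℤ)
    (hinv : ∀ u v, G.Adj u v ↔ |f u - f v| = 1) (b : V)
    (hb : ∀ c d, G.Adj b c → G.Adj b d → c = d) :
    (∀ u, G.Reachable b u → f u ≤ f b) ∨ (∀ u, G.Reachable b u → f b ≤ f u) := by
  by_contra hcon
  push_neg at hcon
  obtain ⟨⟨x, hxr, hxg⟩, ⟨y, hyr, hyg⟩⟩ := hcon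
  have hdiff : ∀ u v, G.Adj u v → |f u - f v| = 1 := fun u v h => (hinv u v).mp h
  have hnot : (¬ ∃ c, f c = f b + 1) ∨ (¬ ∃ c, f c = f b - 1) := by
    by_contra hh
    push_neg at hh
    obtain ⟨⟨c, hc⟩, ⟨d, hd⟩⟩ := hh
    have h1 : G.Adj b c := (hinv b c).mpr (by rw [hc]; simp)
    have h2 : G.Adj b d := (hinv b d).mpr (by rw [hd]; simp)
    have := hb c d h1 h2
    rw [this] at hc
    omega
  rcases hnot with hn | hn
  · obtain ⟨p⟩ := hxr
    obtain ⟨z, _, hz⟩ := walk_ivt f hdiff p (f b + 1) (by omega) (by omega)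
    exact hn ⟨z, hz⟩
  · obtain ⟨p⟩ := hyr.symm
    obtain ⟨z, _, hz⟩ := walk_ivt f hdiff p (f b - 1) (by omega) (by omega)
    exact hn ⟨z, hz⟩

lemma bot_labeling {V : Type*} [Fintype V] (G : SimpleGraph V) (h : ∀ u v, ¬ G.Adj u v) :
    ∃ f : V → ℤ, Injective f ∧ ∀ u v, G.Adj u v ↔ |f u - f v| = 1 := by
  refine ⟨fun v => 2 * ((Fintype.equivFin V v : ℕ) : ℤ), ?_, ?_⟩
  · intro u v huv
    simp only at huv
    have h2 : ((Fintype.equivFin V u : ℕ) : ℤ) = ((Fintype.equivFin V v : ℕ) : ℤ) := by omega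
    have h3 : (Fintype.equivFin V u : ℕ) = (Fintype.equivFin V v : ℕ) := by exact_mod_cast h2
    exact (Fintype.equivFin V).injective (Fin.val_injective h3)
  · intro u v
    simp only [h u v, false_iff]
    intro hab
    rw [abs_eq (by norm_num)] at hab
    omega

lemma key_labeling {V : Type*} [Fintype V] :
    ∀ (n : ℕ) (G : SimpleGraph V), G.edgeSet.ncard ≤ n → G.IsAcyclic →
      (∀ v x y z, G.Adj v x → G.Adj v y → G.Adj v z → x = y ∨ x = z ∨ y = z) →
      ∃ f : V → ℤ, Injective f ∧ ∀ u v, G.Adj u v ↔ |f u - f v| = 1 := by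
  intro n
  induction n with
  | zero =>
    intro G hcard _ _
    refine bot_labeling G (fun u v h => ?_)
    have hmem : s(u,v) ∈ G.edgeSet := h
    have : G.edgeSet = ∅ := by
      have hfin := G.edgeSet.toFinite
      have := Set.ncard_eq_zero hfin |>.mp (Nat.le_zero.mp hcard)
      exact this
    simp [this] at hmem
  | succ n ih =>
    intro G hcard hacyc hdeg
    classical
    by_cases hE : G.edgeSet = ∅
    · exact bot_labeling G (fun u v h => by simp [← mem_edgeSet, hE] at h)
    obtain ⟨e, he⟩ := Set.nonempty_iff_ne_empty.mpr hE
    induction e using Sym2.ind with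
    | _ a b =>
    have hab : G.Adj a b := he
    have hne : a ≠ b := hab.ne
    set G' := G.deleteEdges {s(a,b)} with hG'def
    have hle : G' ≤ G := G.deleteEdges_le _
    have hG'adj : ∀ u v, G'.Adj u v ↔ G.Adj u v ∧ ¬(u = a ∧ v = b) ∧ ¬(u = b ∧ v = a) := by
      intro u v
      rw [hG'def, deleteEdges_adj]
      simp only [Set.mem_singleton_iff, Sym2.eq_iff]
      tauto
    have hGadj : ∀ u v, G.Adj u v ↔ (G'.Adj u v ∨ (u = a ∧ v = b) ∨ (u = b ∧ v = a)) := by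
      intro u v
      constructor
      · intro h
        by_cases h1 : u = a ∧ v = b
        · exact Or.inr (Or.inl h1)
        by_cases h2 : u = b ∧ v = a
        · exact Or.inr (Or.inr h2)
        · exact Or.inl ((hG'adj u v).mpr ⟨h, h1, h2⟩)
      · rintro (h | ⟨rfl, rfl⟩ | ⟨rfl, rfl⟩)
        · exact hle h
        · exact hab
        · exact hab.symm
    have hG'edge : G'.edgeSet = G.edgeSet \ {s(a,b)} := by
      rw [hG'def]; simp [deleteEdges]
    have hcard' : G'.edgeSet.ncard ≤ n := by
      rw [hG'edge]
      have hlt := Set.ncard_diff_singleton_lt_of_mem he G.edgeSet.toFinite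
      omega
    have hacyc' : G'.IsAcyclic := fun v p hp => hacyc (p.mapLe hle) (hp.mapLe hle)
    have hdeg' : ∀ v x y z, G'.Adj v x → G'.Adj v y → G'.Adj v z → x = y ∨ x = z ∨ y = z :=
      fun v x y z h1 h2 h3 => hdeg v x y z (hle h1) (hle h2) (hle h3)
    obtain ⟨f', hfi, hinv⟩ := ih G' hcard' hacyc' hdeg'
    have hbridge : ¬ G'.Reachable a b := by
      have h := (isAcyclic_iff_forall_edge_isBridge.mp hacyc) (G.mem_edgeSet.mpr hab)
      exact isBridge_iff.mp h
    set Sa : Set V := {u | G'.Reachable a u} with hSadef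
    set Sb : Set V := {u | G'.Reachable b u} with hSbdef
    have haSa : a ∈ Sa := Reachable.refl a
    have hbSb : b ∈ Sb := Reachable.refl b
    have hdisj : ∀ u, u ∈ Sa → u ∈ Sb → False := fun u h1 h2 => hbridge (h1.trans h2.symm)
    have hbSa : b ∉ Sa := fun h => hdisj b h hbSb
    have haSb : a ∉ Sb := fun h => hdisj a haSa h
    have hadjSa : ∀ u v, G'.Adj u v → (u ∈ Sa ↔ v ∈ Sa) :=
      fun u v h => ⟨fun hu => hu.trans h.reachable, fun hv => hv.trans h.symm.reachable⟩
    have hadjSb : ∀ u v, G'.Adj u v → (u ∈ Sb ↔ v ∈ Sb) :=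
      fun u v h => ⟨fun hu => hu.trans h.reachable, fun hv => hv.trans h.symm.reachable⟩
    -- endpoint degree conditions
    have hdega : ∀ c d, G'.Adj a c → G'.Adj a d → c = d := by
      intro c d h1 h2
      have hc : c ≠ b := fun hcb => ((hG'adj a c).mp h1).2.1 ⟨rfl, hcb⟩
      have hd : d ≠ b := fun hdb => ((hG'adj a d).mp h2).2.1 ⟨rfl, hdb⟩
      rcases hdeg a c d b (hle h1) (hle h2) hab with h | h | h
      · exact h
      · exact absurd h hc
      · exact absurd h hd
    have hdegb : ∀ c d, G'.Adj b c → G'.Adj b d → c = d := by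
      intro c d h1 h2
      have hc : c ≠ a := fun hca => ((hG'adj b c).mp h1).2.2 ⟨rfl, hca⟩
      have hd : d ≠ a := fun hda => ((hG'adj b d).mp h2).2.2 ⟨rfl, hda⟩
      rcases hdeg b c d a (hle h1) (hle h2) hab.symm with h | h | h
      · exact h
      · exact absurd h hc
      · exact absurd h hd
    obtain ⟨σa, hσa1, hσa⟩ : ∃ σ : ℤ, (σ = 1 ∨ σ = -1) ∧ ∀ u ∈ Sa, σ * f' u ≤ σ * f' a := by
      rcases endpoint_extreme f' hinv a hdega with h | h
      · exact ⟨1, Or.inl rfl, fun u hu => by simpa using h u hu⟩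
      · exact ⟨-1, Or.inr rfl, fun u hu => by simpa using h u hu⟩
    obtain ⟨σb, hσb1, hσb⟩ : ∃ σ : ℤ, (σ = 1 ∨ σ = -1) ∧ ∀ u ∈ Sb, σ * f' b ≤ σ * f' u := by
      rcases endpoint_extreme f' hinv b hdegb with h | h
      · exact ⟨-1, Or.inr rfl, fun u hu => by simpa using h u hu⟩
      · exact ⟨1, Or.inl rfl, fun u hu => by simpa using h u hu⟩
    have : Nonempty V := ⟨a⟩
    obtain ⟨K, hK⟩ : ∃ K : ℤ, ∀ u, |f' u| ≤ K := Finite.exists_le _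
    have hK0 : 0 ≤ K := le_trans (abs_nonneg _) (hK a)
    have habs : ∀ σ : ℤ, (σ = 1 ∨ σ = -1) → ∀ x y : ℤ, |σ * x - σ * y| = |x - y| := by
      rintro σ (rfl | rfl) x y
      · simp
      · rw [show (-1 : ℤ) * x - (-1) * y = -(x - y) by ring, abs_neg]
    have hsinj : ∀ σ : ℤ, (σ = 1 ∨ σ = -1) → ∀ u v : V, σ * f' u = σ * f' v → u = v := by
      rintro σ (rfl | rfl) u v h <;> exact hfi (by omega)
    have hsbound : ∀ σ : ℤ, (σ = 1 ∨ σ = -1) → ∀ u, -K ≤ σ * f' u ∧ σ * f' u ≤ K := by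
      rintro σ (rfl | rfl) u <;> have := hK u <;> rw [abs_le] at this <;> omega
    set Ta : ℤ := 2 * K + 2 with hTadef
    set P : ℤ := σa * f' a + Ta with hPdef
    set Tb : ℤ := P + 1 - σb * f' b with hTbdef
    set f : V → ℤ := fun u =>
      if u ∈ Sa then σa * f' u + Ta else if u ∈ Sb then σb * f' u + Tb else f' u with hfdef
    have hfSa : ∀ u ∈ Sa, f u = σa * f' u + Ta := by
      intro u hu; simp only [hfdef, if_pos hu]
    have hfSb : ∀ u ∈ Sb, f u = σb * f' u + Tb := by
      intro u hu
      have hu' : u ∉ Sa := fun h => hdisj u h hu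
      simp only [hfdef, if_neg hu', if_pos hu]
    have hfO : ∀ u, u ∉ Sa → u ∉ Sb → f u = f' u := by
      intro u h1 h2; simp only [hfdef, if_neg h1, if_neg h2]
    have hfa : f a = P := by rw [hfSa a haSa]
    have hfb : f b = P + 1 := by rw [hfSb b hbSb, hTbdef]; ring
    have hboundSa : ∀ u ∈ Sa, K + 2 ≤ f u ∧ f u ≤ P := by
      intro u hu
      rw [hfSa u hu]
      have h1 := (hsbound σa hσa1 u).1
      have h2 := hσa u hu
      constructor <;> [omega; · rw [hPdef]; omega]
    have hPK : K + 2 ≤ P := (hboundSa a haSa).1.trans_eq (by rw [hfa])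
    have hboundSb : ∀ u ∈ Sb, P + 1 ≤ f u := by
      intro u hu
      rw [hfSb u hu, hTbdef]
      have := hσb u hu
      omega
    have hboundO : ∀ u, u ∉ Sa → u ∉ Sb → f u ≤ K := by
      intro u h1 h2
      rw [hfO u h1 h2]
      have := hK u; rw [abs_le] at this; omega
    -- equality characterizations
    have heqa : ∀ u ∈ Sa, f u = P → u = a := by
      intro u hu h
      rw [hfSa u hu, hPdef] at h
      exact hsinj σa hσa1 u a (by omega)
    have heqb : ∀ u ∈ Sb, f u = P + 1 → u = b := by
      intro u hu h
      rw [hfSb u hu, hTbdef] at h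
      exact hsinj σb hσb1 u b (by omega)
    -- the three diagonal cases
    have caseAA : ∀ u v, u ∈ Sa → v ∈ Sa → (G.Adj u v ↔ |f u - f v| = 1) := by
      intro u v hu hv
      rw [hGadj]
      have hvals : |f u - f v| = |f' u - f' v| := by
        rw [hfSa u hu, hfSa v hv,
          show σa * f' u + Ta - (σa * f' v + Ta) = σa * f' u - σa * f' v by ring,
          habs σa hσa1]
      rw [hvals]
      constructor
      · rintro (h | ⟨rfl, rfl⟩ | ⟨rfl, rfl⟩)
        · exact (hinv u v).mp h
        · exact absurd hv hbSa
        · exact absurd hu hbSa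
      · intro h; exact Or.inl ((hinv u v).mpr h)
    have caseBB : ∀ u v, u ∈ Sb → v ∈ Sb → (G.Adj u v ↔ |f u - f v| = 1) := by
      intro u v hu hv
      rw [hGadj]
      have hvals : |f u - f v| = |f' u - f' v| := by
        rw [hfSb u hu, hfSb v hv,
          show σb * f' u + Tb - (σb * f' v + Tb) = σb * f' u - σb * f' v by ring,
          habs σb hσb1]
      rw [hvals]
      constructor
      · rintro (h | ⟨rfl, rfl⟩ | ⟨rfl, rfl⟩)
        · exact (hinv u v).mp h
        · exact absurd hu haSb
        · exact absurd hv haSb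
      · intro h; exact Or.inl ((hinv u v).mpr h)
    have caseOO : ∀ u v, u ∉ Sa → u ∉ Sb → v ∉ Sa → v ∉ Sb →
        (G.Adj u v ↔ |f u - f v| = 1) := by
      intro u v hu1 hu2 hv1 hv2
      rw [hGadj, hfO u hu1 hu2, hfO v hv1 hv2]
      constructor
      · rintro (h | ⟨rfl, rfl⟩ | ⟨rfl, rfl⟩)
        · exact (hinv u v).mp h
        · exact absurd haSa hu1
        · exact absurd hbSb hu2
      · intro h; exact Or.inl ((hinv u v).mpr h)
    have caseAB : ∀ u v, u ∈ Sa → v ∈ Sb → (G.Adj u v ↔ |f u - f v| = 1) := by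
      intro u v hu hv
      rw [hGadj]
      have h1 := hboundSa u hu
      have h2 := hboundSb v hv
      constructor
      · rintro (h | ⟨rfl, rfl⟩ | ⟨rfl, rfl⟩)
        · exact absurd (((hadjSa u v h).mp hu)) (fun hh => hdisj v hh hv)
        · rw [hfa, hfb]; rw [abs_eq (by norm_num)]; omega
        · exact absurd hu hbSa
      · intro h
        rw [abs_eq (by norm_num)] at h
        have hfu : f u = P := by omega
        have hfv : f v = P + 1 := by omega
        exact Or.inr (Or.inl ⟨heqa u hu hfu, heqb v hv hfv⟩)
    have caseAO : ∀ u v, u ∈ Sa → v ∉ Sa → v ∉ Sb → (G.Adj u v ↔ |f u - f v| = 1) := by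
      intro u v hu hv1 hv2
      rw [hGadj]
      have h1 := hboundSa u hu
      have h2 := hboundO v hv1 hv2
      constructor
      · rintro (h | ⟨rfl, rfl⟩ | ⟨rfl, rfl⟩)
        · exact absurd ((hadjSa u v h).mp hu) hv1
        · exact absurd hbSb hv2
        · exact absurd hu hbSa
      · intro h
        rw [abs_eq (by norm_num)] at h
        omega
    have caseBO : ∀ u v, u ∈ Sb → v ∉ Sa → v ∉ Sb → (G.Adj u v ↔ |f u - f v| = 1) := by
      intro u v hu hv1 hv2
      rw [hGadj]
      have h1 := hboundSb u hu
      have h2 := hboundO v hv1 hv2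
      constructor
      · rintro (h | ⟨rfl, rfl⟩ | ⟨rfl, rfl⟩)
        · exact absurd ((hadjSb u v h).mp hu) hv2
        · exact absurd hu haSb
        · exact absurd haSa hv1
      · intro h
        rw [abs_eq (by norm_num)] at h
        omega
    have flip : ∀ u v, (G.Adj u v ↔ |f u - f v| = 1) → (G.Adj v u ↔ |f v - f u| = 1) := by
      intro u v h
      rw [adj_comm, abs_sub_comm]; exact h
    have main : ∀ u v, G.Adj u v ↔ |f u - f v| = 1 := by
      intro u v
      by_cases hu1 : u ∈ Sa <;> by_cases hv1 : v ∈ Sa <;>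
        by_cases hu2 : u ∈ Sb <;> by_cases hv2 : v ∈ Sb
      all_goals first
        | exact absurd hu2 (fun h => hdisj u hu1 h)
        | exact absurd hv2 (fun h => hdisj v hv1 h)
        | exact caseAA u v hu1 hv1
        | exact caseBB u v hu2 hv2
        | exact caseOO u v hu1 hu2 hv1 hv2
        | exact caseAB u v hu1 hv2
        | exact flip v u (caseAB v u hv1 hu2)
        | exact caseAO u v hu1 hv1' hv2
        | exact caseAO u v hu1 hv1 hv2
        | exact flip v u (caseAO v u hv1 hu1 hu2)
        | exact caseBO u v hu2 hv1 hv2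
        | exact flip v u (caseBO v u hv2 hu1 hu2)
    have hfinj : Injective f := by
      intro u v huv
      by_cases hu1 : u ∈ Sa <;> by_cases hv1 : v ∈ Sa <;>
        by_cases hu2 : u ∈ Sb <;> by_cases hv2 : v ∈ Sb
      all_goals first
        | exact absurd hu2 (fun h => hdisj u hu1 h)
        | exact absurd hv2 (fun h => hdisj v hv1 h)
        | skip
      -- remaining 9 real cases (order: AA, AB, AO, BA, OA, BB, BO, OB, OO)
      · rw [hfSa u hu1, hfSa v hv1] at huv
        exact hsinj σa hσa1 u v (by omega)
      · have := (hboundSa u hu1).2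
        have := hboundSb v hv2
        omega
      · have := (hboundSa u hu1).1
        have := hboundO v hv1 hv2
        omega
      · have := (hboundSa v hv1).2
        have := hboundSb u hu2
        omega
      · have := (hboundSa v hv1).1
        have := hboundO u hu1 hu2
        omega
      · rw [hfSb u hu2, hfSb v hv2] at huv
        exact hsinj σb hσb1 u v (by omega)
      · have := hboundSb u hu2
        have := hboundO v hv1 hv2
        omega
      · have := hboundSb v hv2
        have := hboundO u hu1 hu2
        omega
      · rw [hfO u hu1 hu2, hfO v hv1 hv2] at huv
        exact hfi huv
    exact ⟨f, hfinj, main⟩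

theorem stmt18 {V : Type*} [Fintype V] (G : SimpleGraph V) [DecidableRel G.Adj]
    (hG : G.edgeSet.Nonempty) (hiso : ∀ v, ∃ w, G.Adj v w) :
    diffIndex G = 1 ↔ G.IsAcyclic ∧ ∀ v, G.degree v ≤ 2 := by
  classical
  set S := {k | ∃ f : V → ℤ, Function.Injective f ∧ (edgeMinus f '' G.edgeSet).ncard = k}
    with hSdef
  have hdI : diffIndex G = sInf S := rfl
  have hSne : S.Nonempty := by
    refine ⟨_, fun v => ((Fintype.equivFin V v : ℕ) : ℤ), ?_, rfl⟩
    intro u v h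
    simp only at h
    exact (Fintype.equivFin V).injective (Fin.val_injective (by exact_mod_cast h))
  have hEfin : G.edgeSet.Finite := G.edgeSet.toFinite
  have hzero : 0 ∉ S := by
    rintro ⟨g, hg, h0⟩
    have hfin : (edgeMinus g '' G.edgeSet).Finite := hEfin.image _
    have := (Set.ncard_eq_zero hfin).mp h0
    exact (hG.image (edgeMinus g)).ne_empty this
  have hmk : ∀ (f : V → ℤ) (u v : V), edgeMinus f s(u,v) = |f u - f v| := fun f u v => rfl
  constructor
  · intro h
    have hmem : 1 ∈ S := by
      have := Nat.sInf_mem hSne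
      rwa [← hdI, h] at this
    obtain ⟨f, hfi, hone⟩ := hmem
    obtain ⟨d, hd⟩ := Set.ncard_eq_one.mp hone
    have hedge : ∀ u v, G.Adj u v → |f u - f v| = d := by
      intro u v huv
      have hm : edgeMinus f s(u,v) ∈ edgeMinus f '' G.edgeSet := ⟨s(u,v), huv, rfl⟩
      rw [hd, Set.mem_singleton_iff] at hm
      rw [← hmk f u v]; exact hm
    have hdpos : 0 < d := by
      obtain ⟨e, he⟩ := hG
      induction e using Sym2.ind with
      | _ u v =>
        have huv : G.Adj u v := he
        have h1 := hedge u v huv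
        have hne : f u ≠ f v := fun hh => huv.ne (hfi hh)
        have h2 : 0 < |f u - f v| := abs_pos.mpr (by omega)
        omega
    constructor
    · -- acyclic
      intro x c hc
      obtain ⟨u, huT, hmin⟩ := Finset.exists_min_image c.support.toFinset f
        ⟨x, by simp [List.mem_toFinset]⟩
      rw [List.mem_toFinset] at huT
      have hc' := hc.rotate huT
      set c' := c.rotate u huT with hc'def
      have hnn : ¬ c'.Nil := by
        rw [Walk.nil_iff_length_eq]
        have := hc'.three_le_length
        omega
      obtain ⟨a, hadj, p, hp⟩ := Walk.not_nil_iff.mp hnn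
      rw [hp] at hc'
      obtain ⟨hpath, hedge_notmem⟩ := (Walk.cons_isCycle_iff p hadj).mp hc'
      have hplen : 2 ≤ p.length := by
        have := hc'.three_le_length
        simp only [Walk.length_cons] at this
        omega
      have hrnn : ¬ p.reverse.Nil := by
        rw [Walk.nil_iff_length_eq, Walk.length_reverse]
        omega
      obtain ⟨b, hub, q, hq⟩ := Walk.not_nil_iff.mp hrnn
      have hba : b ≠ a := by
        rintro rfl
        have hqpath : q.IsPath := by
          have h2 := hpath.reverse
          rw [hq] at h2
          exact h2.of_cons
        have h3 := Walk.isPath_iff_eq_nil.mp hqpath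
        subst h3
        have h4 : p.reverse.length = 1 := by rw [hq]; simp
        rw [Walk.length_reverse] at h4
        omega
      have hrot := Walk.support_rotate c u huT
      have hac : a ∈ c.support := by
        have h1 : a ∈ (c.rotate u huT).support.tail := by
          rw [← hc'def, hp]
          simp only [Walk.support_cons, List.tail_cons]
          exact p.start_mem_support
        exact List.mem_of_mem_tail (hrot.mem_iff.mp h1)
      have hbc : b ∈ c.support := by
        have h1 : b ∈ p.support := by
          have h2 : b ∈ p.reverse.support := by
            rw [hq]
            simp [Walk.support_cons, q.start_mem_support]
          rwa [Walk.support_reverse, List.mem_reverse] at h2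
        have h2 : b ∈ (c.rotate u huT).support.tail := by
          rw [← hc'def, hp]
          simpa only [Walk.support_cons, List.tail_cons] using h1
        exact List.mem_of_mem_tail (hrot.mem_iff.mp h2)
      have hfa : f u ≤ f a := hmin a (List.mem_toFinset.mpr hac)
      have hfb : f u ≤ f b := hmin b (List.mem_toFinset.mpr hbc)
      have h1 := hedge u a hadj
      have h2 := hedge u b hub
      rw [abs_eq hdpos.le] at h1 h2
      exact hba (hfi (by omega : f b = f a))
    · -- degree
      intro v
      have h1 : G.degree v = (G.neighborFinset v).card := rfl
      rw [h1]
      have h2 := Finset.card_le_card_of_injOn f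
        (t := ({f v - d, f v + d} : Finset ℤ))
        (s := G.neighborFinset v)
        (fun w hw => by
          rw [Finset.mem_coe, mem_neighborFinset] at hw
          have := hedge v w hw
          rw [abs_eq hdpos.le] at this
          simp only [Finset.mem_coe, Finset.mem_insert, Finset.mem_singleton]
          omega)
        (fun x _ y _ hxy => hfi hxy)
      calc (G.neighborFinset v).card ≤ _ := h2
        _ ≤ 2 := (Finset.card_insert_le _ _).trans (by simp)
  · rintro ⟨hacyc, hdeg⟩
    have hdeg' : ∀ v x y z, G.Adj v x → G.Adj v y → G.Adj v z → x = y ∨ x = z ∨ y = z := by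
      intro v x y z h1 h2 h3
      by_contra hcon
      push_neg at hcon
      obtain ⟨hxy, hxz, hyz⟩ := hcon
      have hsub : ({x, y, z} : Finset V) ⊆ G.neighborFinset v := by
        intro t ht
        simp only [Finset.mem_insert, Finset.mem_singleton] at ht
        rw [mem_neighborFinset]
        rcases ht with rfl | rfl | rfl <;> assumption
      have hcard : ({x, y, z} : Finset V).card = 3 := by
        rw [Finset.card_insert_of_notMem (by simp [hxy, hxz]),
          Finset.card_insert_of_notMem (by simp [hyz]), Finset.card_singleton]
      have hle := Finset.card_le_card hsub
      have hdv := hdeg v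
      rw [show G.degree v = (G.neighborFinset v).card from rfl] at hdv
      omega
    obtain ⟨f, hfi, hinv⟩ := key_labeling G.edgeSet.ncard G le_rfl hacyc hdeg'
    have himg : edgeMinus f '' G.edgeSet = {1} := by
      rw [Set.eq_singleton_iff_unique_mem]
      constructor
      · obtain ⟨e, he⟩ := hG
        refine ⟨e, he, ?_⟩
        induction e using Sym2.ind with
        | _ u v => exact (hinv u v).mp he
      · rintro x ⟨e, he, rfl⟩
        induction e using Sym2.ind with
        | _ u v => exact (hinv u v).mp he
    have h1S : 1 ∈ S := ⟨f, hfi, by rw [himg, Set.ncard_singleton]⟩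
    rw [hdI]
    have hle := Nat.sInf_le h1S
    have hne0 : sInf S ≠ 0 := fun h0 => hzero (h0 ▸ Nat.sInf_mem hSne)
    omega
end
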